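/- Let d, m be positive integers, H a d×m real matrix, R a symmetric positive definite d×d real matrix, Σ₀ a symmetric positive definite m×m real matrix, μ₀ ∈ ℝ^m, ŷ = Hμ₀, and fix y ∈ ℝ^d. Let W : ℝ^d → ℝ be a weighting function and suppose (i) there exists C₂ < ∞ with W(y')² ≤ C₂ for all y' ∈ ℝ^d, and (ii) there exists C₇ < ∞ with W(y')² ‖y'‖₂ ≤ C₇ for all y' ∈ ℝ^d. For each y' ∈ ℝ^d define Σ(y') = (Σ₀⁻¹ + W(y')² Hᵀ R⁻¹ H)⁻¹ (the matrix being inverted is positive definite, hence invertible) and μ(y') = μ₀ + W(y')² Σ(y') Hᵀ R⁻¹ (y' − ŷ), and define the posterior influence function PIF(y^c) = (1/2)[ Tr(Σ(y^c)⁻¹ Σ(y)) − m + (μ(y) − μ(y^c))ᵀ Σ(y^c)⁻¹ (μ(y) − μ(y^c)) + log(det Σ(y^c) / det Σ(y)) ]. Then there exists a constant C < ∞ such that PIF(y^c) ≤ C for all y^c ∈ ℝ^d; that is, the weighted observation likelihood filter posterior is outlier robust. -/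

import Mathlib

open Matrix

set_option maxHeartbeats 1000000

/-- The WoLF posterior covariance `Σ(y') = (Σ₀⁻¹ + W(y')² Hᵀ R⁻¹ H)⁻¹`. -/
noncomputable def wolfCov {d m : ℕ} (H : Matrix (Fin d) (Fin m) ℝ)
    (R : Matrix (Fin d) (Fin d) ℝ) (S0 : Matrix (Fin m) (Fin m) ℝ)
    (W : (Fin d → ℝ) → ℝ) (y' : Fin d → ℝ) : Matrix (Fin m) (Fin m) ℝ :=
  (S0⁻¹ + (W y' ^ 2) • (Hᵀ * R⁻¹ * H))⁻¹

/-- The WoLF posterior mean `μ(y') = μ₀ + W(y')² Σ(y') Hᵀ R⁻¹ (y' − ŷ)` with `ŷ = Hμ₀`. -/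
noncomputable def wolfMean {d m : ℕ} (H : Matrix (Fin d) (Fin m) ℝ)
    (R : Matrix (Fin d) (Fin d) ℝ) (S0 : Matrix (Fin m) (Fin m) ℝ)
    (μ₀ : Fin m → ℝ) (W : (Fin d → ℝ) → ℝ) (y' : Fin d → ℝ) : Fin m → ℝ :=
  μ₀ + (W y' ^ 2) • (wolfCov H R S0 W y').mulVec
    (Hᵀ.mulVec (R⁻¹.mulVec (y' - H.mulVec μ₀)))

/-- The posterior influence function of the WoLF posterior: the Kullback–Leibler divergence
`KL(N(μ(y^c), Σ(y^c)) ‖ N(μ(y), Σ(y)))` in closed form. -/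
noncomputable def wolfPIF {d m : ℕ} (H : Matrix (Fin d) (Fin m) ℝ)
    (R : Matrix (Fin d) (Fin d) ℝ) (S0 : Matrix (Fin m) (Fin m) ℝ)
    (μ₀ : Fin m → ℝ) (W : (Fin d → ℝ) → ℝ) (y yc : Fin d → ℝ) : ℝ :=
  (1 / 2) * (((wolfCov H R S0 W yc)⁻¹ * wolfCov H R S0 W y).trace - (m : ℝ)
    + (wolfMean H R S0 μ₀ W y - wolfMean H R S0 μ₀ W yc) ⬝ᵥ
        ((wolfCov H R S0 W yc)⁻¹).mulVec
          (wolfMean H R S0 μ₀ W y - wolfMean H R S0 μ₀ W yc)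
    + Real.log ((wolfCov H R S0 W yc).det / (wolfCov H R S0 W y).det))

/-- Auxiliary: the WoLF posterior precision as a function of the squared weight. -/
noncomputable def wolfPrec {d m : ℕ} (H : Matrix (Fin d) (Fin m) ℝ)
    (R : Matrix (Fin d) (Fin d) ℝ) (S0 : Matrix (Fin m) (Fin m) ℝ)
    (w : ℝ) : Matrix (Fin m) (Fin m) ℝ :=
  S0⁻¹ + w • (Hᵀ * R⁻¹ * H)

lemma wolfCov_eq_inv_prec {d m : ℕ} (H : Matrix (Fin d) (Fin m) ℝ)
    (R : Matrix (Fin d) (Fin d) ℝ) (S0 : Matrix (Fin m) (Fin m) ℝ)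
    (W : (Fin d → ℝ) → ℝ) (y' : Fin d → ℝ) :
    wolfCov H R S0 W y' = (wolfPrec H R S0 (W y' ^ 2))⁻¹ := rfl

lemma smul_posSemidef' {n : ℕ} {A : Matrix (Fin n) (Fin n) ℝ}
    (hA : A.PosSemidef) {c : ℝ} (hc : 0 ≤ c) : (c • A).PosSemidef := by
  refine posSemidef_iff_dotProduct_mulVec.mpr ⟨?_, fun x => ?_⟩
  · show (c • A)ᴴ = c • A
    rw [conjTranspose_smul, star_trivial, hA.1]
  · rw [smul_mulVec, dotProduct_smul, smul_eq_mul]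
    exact mul_nonneg hc (hA.dotProduct_mulVec_nonneg x)

lemma pi_norm_le_sqrt_dot {n : ℕ} (x : Fin n → ℝ) : ‖x‖ ≤ Real.sqrt (x ⬝ᵥ x) := by
  rw [pi_norm_le_iff_of_nonneg (Real.sqrt_nonneg _)]
  intro i
  rw [Real.norm_eq_abs, ← Real.sqrt_sq_eq_abs]
  apply Real.sqrt_le_sqrt
  rw [sq, dotProduct]
  exact Finset.single_le_sum (f := fun j => x j * x j)
    (fun j _ => mul_self_nonneg _) (Finset.mem_univ i)

/-- Lemmas D.2/D.4 (robustness half of Theorem 4.1): under the boundedness conditions on the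
weighting function `W`, the posterior precision is positive definite and the posterior
influence function of the WoLF posterior is uniformly bounded: the filter is outlier robust. -/
theorem wolf_pif_bounded {d m : ℕ} (hd : 0 < d) (hm : 0 < m)
    (H : Matrix (Fin d) (Fin m) ℝ)
    (R : Matrix (Fin d) (Fin d) ℝ) (hR : R.PosDef)
    (S0 : Matrix (Fin m) (Fin m) ℝ) (hS0 : S0.PosDef)
    (μ₀ : Fin m → ℝ) (y : Fin d → ℝ)
    (W : (Fin d → ℝ) → ℝ) (C₂ C₇ : ℝ)
    (hW1 : ∀ y' : Fin d → ℝ, W y' ^ 2 ≤ C₂)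
    (hW2 : ∀ y' : Fin d → ℝ, W y' ^ 2 * Real.sqrt (y' ⬝ᵥ y') ≤ C₇) :
    (∀ y' : Fin d → ℝ, (S0⁻¹ + (W y' ^ 2) • (Hᵀ * R⁻¹ * H)).PosDef) ∧
    ∃ C : ℝ, ∀ yc : Fin d → ℝ, wolfPIF H R S0 μ₀ W y yc ≤ C := by
  classical
  have hApsd : (Hᵀ * R⁻¹ * H).PosSemidef := by
    have h := hR.inv.posSemidef.conjTranspose_mul_mul_same (B := H)
    rwa [conjTranspose_eq_transpose_of_trivial] at h
  set P : ℝ → Matrix (Fin m) (Fin m) ℝ := wolfPrec H R S0 with hPdef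
  have hP : ∀ w : ℝ, 0 ≤ w → (P w).PosDef := fun w hw =>
    hS0.inv.add_posSemidef (smul_posSemidef' hApsd hw)
  refine ⟨fun y' => hP _ (sq_nonneg _), ?_⟩
  set wy := W y ^ 2 with hwy
  have hwy0 : 0 ≤ wy := sq_nonneg _
  set Sy := (P wy)⁻¹ with hSy
  have hSydet : 0 < Sy.det := ((hP wy hwy0).inv).det_pos
  set μy := wolfMean H R S0 μ₀ W y with hμy
  set yhat := H.mulVec μ₀ with hyhat
  set K : Set (ℝ × (Fin d → ℝ)) :=
    Set.Icc 0 C₂ ×ˢ Metric.closedBall 0 (C₇ + C₂ * ‖yhat‖) with hKdef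
  have hKcomp : IsCompact K := isCompact_Icc.prod (isCompact_closedBall _ _)
  set g : ℝ × (Fin d → ℝ) → ℝ := fun p =>
    (1 / 2) * ((P p.1 * Sy).trace - (m : ℝ)
      + (μy - (μ₀ + ((P p.1)⁻¹).mulVec (Hᵀ.mulVec (R⁻¹.mulVec p.2)))) ⬝ᵥ
          (P p.1).mulVec
            (μy - (μ₀ + ((P p.1)⁻¹).mulVec (Hᵀ.mulVec (R⁻¹.mulVec p.2))))
      + Real.log (((P p.1)⁻¹).det / Sy.det)) with hg
  -- continuity
  have hPcont : Continuous P := by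
    have : Continuous fun w : ℝ => S0⁻¹ + w • (Hᵀ * R⁻¹ * H) :=
      continuous_const.add (continuous_id.smul continuous_const)
    exact this
  have hdetne : ∀ p ∈ K, (P p.1).det ≠ 0 := fun p hp => (hP p.1 hp.1.1).det_pos.ne'
  have hinv : ContinuousOn (fun p : ℝ × (Fin d → ℝ) => (P p.1)⁻¹) K := by
    intro p hp
    apply ContinuousAt.continuousWithinAt
    have h1 : ContinuousAt Inv.inv (P p.1) :=
      continuousAt_matrix_inv _ (by
        rw [Ring.inverse_eq_inv']
        exact continuousAt_inv₀ (hdetne p hp))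
    exact ContinuousAt.comp (f := fun p : ℝ × (Fin d → ℝ) => P p.1) h1
      ((hPcont.comp continuous_fst).continuousAt)
  have hmv : Continuous fun q : Matrix (Fin m) (Fin m) ℝ × (Fin m → ℝ) =>
      q.1.mulVec q.2 := continuous_fst.matrix_mulVec continuous_snd
  have hdp : Continuous fun q : (Fin m → ℝ) × (Fin m → ℝ) => q.1 ⬝ᵥ q.2 :=
    continuous_fst.dotProduct continuous_snd
  have hv : ContinuousOn
      (fun p : ℝ × (Fin d → ℝ) => ((P p.1)⁻¹).mulVec (Hᵀ.mulVec (R⁻¹.mulVec p.2))) K := by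
    have h2 : Continuous fun p : ℝ × (Fin d → ℝ) => Hᵀ.mulVec (R⁻¹.mulVec p.2) :=
      continuous_const.matrix_mulVec (continuous_const.matrix_mulVec continuous_snd)
    exact hmv.comp_continuousOn (hinv.prodMk h2.continuousOn)
  have hΔ : ContinuousOn
      (fun p : ℝ × (Fin d → ℝ) =>
        μy - (μ₀ + ((P p.1)⁻¹).mulVec (Hᵀ.mulVec (R⁻¹.mulVec p.2)))) K :=
    continuousOn_const.sub (continuousOn_const.add hv)
  have hquad : ContinuousOn
      (fun p : ℝ × (Fin d → ℝ) =>
        (μy - (μ₀ + ((P p.1)⁻¹).mulVec (Hᵀ.mulVec (R⁻¹.mulVec p.2)))) ⬝ᵥ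
          (P p.1).mulVec
            (μy - (μ₀ + ((P p.1)⁻¹).mulVec (Hᵀ.mulVec (R⁻¹.mulVec p.2))))) K := by
    have hPv : ContinuousOn
        (fun p : ℝ × (Fin d → ℝ) =>
          (P p.1).mulVec
            (μy - (μ₀ + ((P p.1)⁻¹).mulVec (Hᵀ.mulVec (R⁻¹.mulVec p.2))))) K :=
      hmv.comp_continuousOn (((hPcont.comp continuous_fst).continuousOn).prodMk hΔ)
    exact hdp.comp_continuousOn (hΔ.prodMk hPv)
  have htr : ContinuousOn (fun p : ℝ × (Fin d → ℝ) => (P p.1 * Sy).trace) K :=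
    (((hPcont.comp continuous_fst).matrix_mul continuous_const).matrix_trace).continuousOn
  have hlog : ContinuousOn
      (fun p : ℝ × (Fin d → ℝ) => Real.log (((P p.1)⁻¹).det / Sy.det)) K := by
    refine ContinuousOn.log ?_ ?_
    · exact ((continuous_id.matrix_det).comp_continuousOn hinv).div_const _
    · intro p hp
      exact div_ne_zero ((hP p.1 hp.1.1).inv.det_pos.ne') hSydet.ne'
  have hgcont : ContinuousOn g K := by
    rw [hg]
    exact continuousOn_const.mul (((htr.sub continuousOn_const).add hquad).add hlog)
  obtain ⟨C, hC⟩ := hKcomp.exists_bound_of_continuousOn hgcont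
  refine ⟨C, fun yc => ?_⟩
  set w := W yc ^ 2 with hw
  have hw0 : 0 ≤ w := sq_nonneg _
  set v := w • (yc - yhat) with hv'
  -- membership in K
  have hmem : (w, v) ∈ K := by
    constructor
    · exact ⟨hw0, hW1 yc⟩
    · rw [Metric.mem_closedBall, dist_zero_right, hv', norm_smul, Real.norm_eq_abs,
        abs_of_nonneg hw0]
      have h1 : w * ‖yc - yhat‖ ≤ w * ‖yc‖ + w * ‖yhat‖ := by
        have := mul_le_mul_of_nonneg_left (norm_sub_le yc yhat) hw0
        linarith [this]
      have h2 : w * ‖yc‖ ≤ C₇ := by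
        have := mul_le_mul_of_nonneg_left (pi_norm_le_sqrt_dot yc) hw0
        exact this.trans (hW2 yc)
      have h3 : w * ‖yhat‖ ≤ C₂ * ‖yhat‖ :=
        mul_le_mul_of_nonneg_right (hW1 yc) (norm_nonneg _)
      linarith
  -- identify the PIF with g
  have hiv : (P w)⁻¹⁻¹ = P w :=
    nonsing_inv_nonsing_inv _ (hP w hw0).det_pos.ne'.isUnit
  have hmean : wolfMean H R S0 μ₀ W yc
      = μ₀ + ((P w)⁻¹).mulVec (Hᵀ.mulVec (R⁻¹.mulVec v)) := by
    rw [hv']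
    simp only [wolfMean, wolfCov_eq_inv_prec, Matrix.mulVec_smul]
    rfl
  have heq : wolfPIF H R S0 μ₀ W y yc = g (w, v) := by
    rw [hg]
    have hiv' : (wolfPrec H R S0 (W yc ^ 2))⁻¹⁻¹ = wolfPrec H R S0 (W yc ^ 2) := hiv
    simp only [wolfPIF, wolfCov_eq_inv_prec, hmean, hiv']
    rfl
  calc wolfPIF H R S0 μ₀ W y yc = g (w, v) := heq
    _ ≤ ‖g (w, v)‖ := le_abs_self _
    _ ≤ C := hC _ hmem
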